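/- The function φ(t) = (1/3)‖t - t₀‖³ on ℝ^d is twice differentiable with Hessian Lipschitz continuous with constant 2: ‖∇²φ(x) - ∇²φ(y)‖ ≤ 2‖x - y‖ for all x, y. -/

import Mathlib

open RealInnerProductSpace

noncomputable section CubedNormAux

variable {E : Type*} [NormedAddCommGroup E] [InnerProductSpace ℝ E]

/-- the real inner product as a continuous bilinear map. -/
def innerB : E →L[ℝ] E →L[ℝ] ℝ := innerSL ℝ

@[simp] lemma innerB_apply (v w : E) : innerB v w = ⟪v, w⟫ := rfl

/-- first derivative of `(1/3)‖·‖³`. -/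
def cubedAuxF (u : E) : E →L[ℝ] ℝ := ‖u‖ • innerSL ℝ u

/-- second derivative of `(1/3)‖·‖³`. -/
def cubedAuxB (u : E) : E →L[ℝ] E →L[ℝ] ℝ :=
  ‖u‖ • innerB + ‖u‖⁻¹ • (innerSL ℝ u).smulRight (innerSL ℝ u)

lemma cubedAuxB_apply (u v w : E) :
    cubedAuxB u v w = ‖u‖ * ⟪v, w⟫ + ‖u‖⁻¹ * (⟪u, v⟫ * ⟪u, w⟫) := by
  simp [cubedAuxB, mul_comm, mul_assoc, mul_left_comm]

lemma cubedAuxB_zero : cubedAuxB (0 : E) = 0 := by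
  ext v w
  simp [cubedAuxB_apply]

lemma hasFDerivAt_cubedAuxF (u : E) : HasFDerivAt cubedAuxF (cubedAuxB u) u := by
  rcases eq_or_ne u 0 with rfl | hu
  · rw [hasFDerivAt_iff_isLittleO_nhds_zero]
    have h0 : cubedAuxF (0 : E) = 0 := by simp [cubedAuxF]
    rw [cubedAuxB_zero, h0]
    rw [Asymptotics.isLittleO_iff]
    intro c hc
    filter_upwards [Metric.ball_mem_nhds (0 : E) hc] with h hh
    rw [Metric.mem_ball, dist_zero_right] at hh
    have hF : ‖cubedAuxF h‖ = ‖h‖ * ‖h‖ := by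
      have := norm_smul ‖h‖ (innerSL ℝ h)
      rw [show cubedAuxF h = ‖h‖ • innerSL ℝ h from rfl, this, innerSL_apply_norm]
      simp
    simp only [ContinuousLinearMap.zero_apply, sub_zero, zero_add]
    rw [hF]
    exact mul_le_mul_of_nonneg_right hh.le (norm_nonneg _)
  · have hn : (0:ℝ) < ‖u‖ := norm_pos_iff.mpr hu
    have hsq : HasFDerivAt (fun x : E => ‖x‖ ^ 2) (2 • innerSL ℝ u) u :=
      (hasStrictFDerivAt_norm_sq u).hasFDerivAt
    have hsqrt : HasDerivAt Real.sqrt (1 / (2 * Real.sqrt (‖u‖ ^ 2))) (‖u‖ ^ 2) :=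
      Real.hasDerivAt_sqrt (by positivity)
    have hnorm' : HasFDerivAt (fun x : E => Real.sqrt (‖x‖ ^ 2))
        ((1 / (2 * Real.sqrt (‖u‖ ^ 2))) • (2 • innerSL ℝ u)) u :=
      hsqrt.comp_hasFDerivAt u hsq
    have hnorm : HasFDerivAt (fun x : E => ‖x‖) (‖u‖⁻¹ • innerSL ℝ u) u := by
      have hfun : (fun x : E => Real.sqrt (‖x‖ ^ 2)) = fun x : E => ‖x‖ := by
        funext x; rw [Real.sqrt_sq (norm_nonneg x)]
      rw [hfun] at hnorm'
      convert hnorm' using 1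
      ext v
      rw [Real.sqrt_sq (norm_nonneg u)]
      simp only [ContinuousLinearMap.smul_apply, smul_eq_mul, innerSL_apply_apply]
      field_simp
      ring
    have hL : HasFDerivAt (fun x : E => innerSL ℝ x) innerB u := by
      exact innerB.hasFDerivAt
    have hmain := hnorm.smul hL
    have hFun : (fun y : E => ‖y‖ • innerSL ℝ y) = (cubedAuxF : E → E →L[ℝ] ℝ) := rfl
    change HasFDerivAt (fun y : E => ‖y‖ • innerSL ℝ y) _ u at hmain
    rw [hFun] at hmain
    refine hmain.congr_fderiv ?_
    ext v w
    simp only [cubedAuxB, ContinuousLinearMap.add_apply, ContinuousLinearMap.smul_apply,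
      ContinuousLinearMap.smulRight_apply, innerSL_apply_apply, innerB_apply, smul_eq_mul]
    ring

lemma hasFDerivAt_cubed (t₀ t : E) :
    HasFDerivAt (fun t : E => (1/3 : ℝ) * ‖t - t₀‖ ^ 3) (cubedAuxF (t - t₀)) t := by
  have h3 : (1:ℝ) < 3 := by norm_num
  have h := (hasFDerivAt_norm_rpow (t - t₀) h3).comp t ((hasFDerivAt_id t).sub_const t₀)
  have h' := h.const_mul (1/3 : ℝ)
  have h'' := h'.congr_of_eventuallyEq (Filter.Eventually.of_forall (fun x => by
    show (1/3 : ℝ) * ‖x - t₀‖ ^ 3 = (1/3 : ℝ) * ((fun x : E => ‖x‖ ^ (3:ℝ)) ∘ fun x => id x - t₀) x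
    simp only [Function.comp_apply, id_eq]
    rw [show ((3:ℝ)) = ((3:ℕ):ℝ) by norm_num, Real.rpow_natCast]))
  refine h''.congr_fderiv ?_
  ext v
  simp only [cubedAuxF, ContinuousLinearMap.smul_apply, ContinuousLinearMap.coe_comp',
    Function.comp_apply, ContinuousLinearMap.coe_id', id_eq, innerSL_apply_apply, smul_eq_mul]
  rw [show (3:ℝ) - 2 = 1 by norm_num, Real.rpow_one]
  ring

end CubedNormAux

section Lip

variable {E : Type*} [NormedAddCommGroup E] [InnerProductSpace ℝ E]

lemma cubedAuxB_diag (u v : E) :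
    cubedAuxB u v v = ‖u‖ * ‖v‖ ^ 2 + ‖u‖⁻¹ * ⟪u, v⟫ ^ 2 := by
  rw [cubedAuxB_apply, real_inner_self_eq_norm_sq]
  ring

lemma cubedAuxB_diag_nonneg (u v : E) : 0 ≤ cubedAuxB u v v := by
  rw [cubedAuxB_diag]
  positivity

lemma cubedAuxB_diag_sub_le (p q v : E) :
    cubedAuxB p v v - cubedAuxB q v v ≤ 2 * ‖p - q‖ * ‖v‖ ^ 2 := by
  rcases eq_or_ne p 0 with rfl | hp
  · have h1 := cubedAuxB_diag_nonneg q v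
    have h2 : cubedAuxB (0 : E) v v = 0 := by rw [cubedAuxB_zero]; simp
    have : (0:ℝ) ≤ 2 * ‖(0:E) - q‖ * ‖v‖ ^ 2 := by positivity
    linarith
  rcases eq_or_ne v 0 with rfl | hv
  · simp [cubedAuxB_diag]
  have hp' : (0:ℝ) < ‖p‖ := norm_pos_iff.mpr hp
  have hv' : (0:ℝ) < ‖v‖ := norm_pos_iff.mpr hv
  set β : ℝ := ⟪p, v⟫ / (‖p‖ * ‖v‖) with hβdef
  have hβ : |β| ≤ 1 := by
    rw [hβdef, abs_div, abs_of_pos (by positivity : (0:ℝ) < ‖p‖ * ‖v‖)]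
    exact div_le_one_of_le₀ (abs_real_inner_le_norm p v) (by positivity)
  have hβpv : ⟪p, v⟫ = β * ‖p‖ * ‖v‖ := by
    rw [hβdef]; field_simp
  have key1 : cubedAuxB p v v = (1 - β^2) * ‖p‖ * ‖v‖^2 + 2 * β * ⟪p, v⟫ * ‖v‖ := by
    rw [cubedAuxB_diag, hβpv]
    field_simp
    ring
  have key2 : (1 - β^2) * ‖q‖ * ‖v‖^2 + 2 * β * ⟪q, v⟫ * ‖v‖ ≤ cubedAuxB q v v := by
    rcases eq_or_ne q 0 with rfl | hq
    · rw [cubedAuxB_zero]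
      simp
    have hq' : (0:ℝ) < ‖q‖ := norm_pos_iff.mpr hq
    have hinv : ‖q‖⁻¹ * ‖q‖ = 1 := inv_mul_cancel₀ hq'.ne'
    rw [cubedAuxB_diag]
    have hsq := sq_nonneg (β * ‖q‖ * ‖v‖ - ⟪q, v⟫)
    have hqinv : (0:ℝ) < ‖q‖⁻¹ := by positivity
    nlinarith [sq_nonneg (⟪q, v⟫), mul_pos hq' hqinv, hinv, hsq, hq']
  -- the linear comparison
  have h1 := abs_norm_sub_norm_le p q
  have h2 := abs_real_inner_le_norm (p - q) v
  have hb2 : (0:ℝ) ≤ 1 - β^2 := by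
    nlinarith [mul_nonneg (sub_nonneg.mpr hβ) (by positivity : (0:ℝ) ≤ 1 + |β|), sq_abs β]
  have t1 : (1 - β^2) * (‖p‖ - ‖q‖) * ‖v‖^2 ≤ (1 - β^2) * ‖p - q‖ * ‖v‖^2 :=
    mul_le_mul_of_nonneg_right
      (mul_le_mul_of_nonneg_left (abs_le.mp h1).2 hb2) (sq_nonneg _)
  have t2 : 2 * β * ⟪p - q, v⟫ * ‖v‖ ≤ 2 * |β| * (‖p - q‖ * ‖v‖) * ‖v‖ := by
    have hh : β * ⟪p - q, v⟫ ≤ |β| * (‖p - q‖ * ‖v‖) := by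
      calc β * ⟪p - q, v⟫ ≤ |β * ⟪p - q, v⟫| := le_abs_self _
        _ = |β| * |⟪p - q, v⟫| := abs_mul _ _
        _ ≤ |β| * (‖p - q‖ * ‖v‖) := mul_le_mul_of_nonneg_left h2 (abs_nonneg β)
    nlinarith [norm_nonneg v]
  have t3 : (1 - β^2) * ‖p - q‖ * ‖v‖^2 + 2 * |β| * (‖p - q‖ * ‖v‖) * ‖v‖
      ≤ 2 * ‖p - q‖ * ‖v‖^2 := by
    have hnn : (0:ℝ) ≤ (1 - |β|)^2 * ‖p - q‖ * ‖v‖^2 := by positivity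
    have hb2' : β^2 = |β|^2 := (sq_abs β).symm
    rw [hb2']
    nlinarith [hnn]
  calc cubedAuxB p v v - cubedAuxB q v v
      ≤ ((1 - β^2) * ‖p‖ * ‖v‖^2 + 2 * β * ⟪p, v⟫ * ‖v‖)
        - ((1 - β^2) * ‖q‖ * ‖v‖^2 + 2 * β * ⟪q, v⟫ * ‖v‖) := by
        rw [key1]; linarith
    _ = (1 - β^2) * (‖p‖ - ‖q‖) * ‖v‖^2 + 2 * β * ⟪p - q, v⟫ * ‖v‖ := by
        rw [inner_sub_left]; ring
    _ ≤ 2 * ‖p - q‖ * ‖v‖^2 := by linarith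

lemma cubedAuxB_diag_abs (p q v : E) :
    |cubedAuxB p v v - cubedAuxB q v v| ≤ 2 * ‖p - q‖ * ‖v‖ ^ 2 := by
  rw [abs_le]
  constructor
  · have := cubedAuxB_diag_sub_le q p v
    rw [norm_sub_rev] at this
    linarith
  · exact cubedAuxB_diag_sub_le p q v

set_option maxHeartbeats 1000000 in
lemma cubedAuxB_op_bound (p q : E) :
    ‖cubedAuxB p - cubedAuxB q‖ ≤ 2 * ‖p - q‖ := by
  set A : E →L[ℝ] E →L[ℝ] ℝ := cubedAuxB p - cubedAuxB q with hA
  set C : ℝ := 2 * ‖p - q‖ with hC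
  have hC0 : 0 ≤ C := by positivity
  have hdiag : ∀ v : E, |A v v| ≤ C * ‖v‖ ^ 2 := by
    intro v
    have := cubedAuxB_diag_abs p q v
    simpa [hA, hC, ContinuousLinearMap.sub_apply, mul_assoc] using this
  have hsym : ∀ v w : E, A v w = A w v := by
    intro v w
    simp only [hA, ContinuousLinearMap.sub_apply, cubedAuxB_apply]
    rw [real_inner_comm v w]
    ring
  -- polarization : bound by sum of squares
  have hpol : ∀ v w : E, |A v w| ≤ C * (‖v‖ ^ 2 + ‖w‖ ^ 2) / 2 := by
    intro v w
    have e1 : A (v + w) (v + w) = A v v + A v w + A w v + A w w := by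
      simp only [map_add, ContinuousLinearMap.add_apply]
      ring
    have e2 : A (v - w) (v - w) = A v v - A v w - A w v + A w w := by
      simp only [map_sub, ContinuousLinearMap.sub_apply, map_add, map_sub,
        ContinuousLinearMap.add_apply]
      ring
    have e3 : A v w = (A (v + w) (v + w) - A (v - w) (v - w)) / 4 := by
      rw [e1, e2, hsym w v]; ring
    have b1 := hdiag (v + w)
    have b2 := hdiag (v - w)
    have hpar : ‖v + w‖ ^ 2 + ‖v - w‖ ^ 2 = 2 * (‖v‖ ^ 2 + ‖w‖ ^ 2) := by
      have := parallelogram_law_with_norm ℝ v w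
      nlinarith [this]
    rw [e3, abs_div]
    rw [abs_of_pos (by norm_num : (0:ℝ) < 4)]
    have habs : |A (v + w) (v + w) - A (v - w) (v - w)|
        ≤ C * ‖v + w‖ ^ 2 + C * ‖v - w‖ ^ 2 := by
      calc |A (v + w) (v + w) - A (v - w) (v - w)|
          ≤ |A (v + w) (v + w)| + |A (v - w) (v - w)| := abs_sub _ _
        _ ≤ C * ‖v + w‖ ^ 2 + C * ‖v - w‖ ^ 2 := add_le_add b1 b2
    nlinarith [habs]
  -- scale to product bound
  have hprod : ∀ v w : E, |A v w| ≤ C * ‖v‖ * ‖w‖ := by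
    intro v w
    rcases eq_or_ne v 0 with rfl | hv
    · simp
    rcases eq_or_ne w 0 with rfl | hw
    · simp
    have hv' : (0:ℝ) < ‖v‖ := norm_pos_iff.mpr hv
    have hw' : (0:ℝ) < ‖w‖ := norm_pos_iff.mpr hw
    set s : ℝ := Real.sqrt (‖w‖ / ‖v‖) with hs
    have hspos : 0 < s := Real.sqrt_pos.mpr (by positivity)
    have hs2 : s ^ 2 = ‖w‖ / ‖v‖ := Real.sq_sqrt (by positivity)
    have hAvw : A (s • v) (s⁻¹ • w) = A v w := by
      simp only [map_smul, ContinuousLinearMap.smul_apply, smul_eq_mul]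
      field_simp
    have hb := hpol (s • v) (s⁻¹ • w)
    rw [hAvw] at hb
    have hn1 : ‖s • v‖ ^ 2 = s ^ 2 * ‖v‖ ^ 2 := by
      rw [norm_smul, Real.norm_eq_abs, mul_pow, sq_abs]
    have hn2 : ‖s⁻¹ • w‖ ^ 2 = (s ^ 2)⁻¹ * ‖w‖ ^ 2 := by
      rw [norm_smul, Real.norm_eq_abs, mul_pow, sq_abs, inv_pow]
    rw [hn1, hn2, hs2] at hb
    have heq : ‖w‖ / ‖v‖ * ‖v‖ ^ 2 = ‖v‖ * ‖w‖ := by field_simp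
    have heq2 : (‖w‖ / ‖v‖)⁻¹ * ‖w‖ ^ 2 = ‖v‖ * ‖w‖ := by field_simp
    rw [heq, heq2] at hb
    calc |A v w| ≤ C * (‖v‖ * ‖w‖ + ‖v‖ * ‖w‖) / 2 := hb
      _ = C * ‖v‖ * ‖w‖ := by ring
  refine ContinuousLinearMap.opNorm_le_bound _ hC0 (fun v => ?_)
  refine ContinuousLinearMap.opNorm_le_bound _ (by positivity) (fun w => ?_)
  have := hprod v w
  rw [Real.norm_eq_abs]
  linarith

end Lip

theorem cubed_norm_hessian_lipschitz {d : ℕ} (t₀ : EuclideanSpace ℝ (Fin d)) :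
    ContDiff ℝ 2 (fun t : EuclideanSpace ℝ (Fin d) => (1/3) * ‖t - t₀‖ ^ 3) ∧
    ∀ x y : EuclideanSpace ℝ (Fin d),
      ‖fderiv ℝ (fderiv ℝ (fun t : EuclideanSpace ℝ (Fin d) => (1/3) * ‖t - t₀‖ ^ 3)) x -
        fderiv ℝ (fderiv ℝ (fun t : EuclideanSpace ℝ (Fin d) => (1/3) * ‖t - t₀‖ ^ 3)) y‖ ≤
        2 * ‖x - y‖ := by
  have hd1 : ∀ t, HasFDerivAt (fun t : EuclideanSpace ℝ (Fin d) => (1/3 : ℝ) * ‖t - t₀‖ ^ 3)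
      (cubedAuxF (t - t₀)) t := fun t => hasFDerivAt_cubed t₀ t
  have hf1 : fderiv ℝ (fun t : EuclideanSpace ℝ (Fin d) => (1/3 : ℝ) * ‖t - t₀‖ ^ 3)
      = fun t => cubedAuxF (t - t₀) := funext fun t => (hd1 t).fderiv
  have hd2 : ∀ x : EuclideanSpace ℝ (Fin d),
      HasFDerivAt (fun t : EuclideanSpace ℝ (Fin d) => cubedAuxF (t - t₀))
        (cubedAuxB (x - t₀)) x := by
    intro x
    have := (hasFDerivAt_cubedAuxF (x - t₀)).comp x ((hasFDerivAt_id x).sub_const t₀)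
    simpa [Function.comp_def] using this
  have hf2 : fderiv ℝ (fderiv ℝ (fun t : EuclideanSpace ℝ (Fin d) => (1/3 : ℝ) * ‖t - t₀‖ ^ 3))
      = fun x => cubedAuxB (x - t₀) := by
    rw [hf1]; exact funext fun x => (hd2 x).fderiv
  have hlip : LipschitzWith 2 (cubedAuxB : EuclideanSpace ℝ (Fin d) → _) := by
    apply LipschitzWith.of_dist_le_mul
    intro a b
    simp only [dist_eq_norm]
    exact_mod_cast cubedAuxB_op_bound a b
  constructor
  · rw [show (2 : WithTop ℕ∞) = 1 + 1 by norm_num, contDiff_succ_iff_fderiv]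
    refine ⟨fun t => (hd1 t).differentiableAt, by simp, ?_⟩
    rw [hf1, contDiff_one_iff_fderiv]
    refine ⟨fun x => (hd2 x).differentiableAt, ?_⟩
    rw [funext fun x => (hd2 x).fderiv]
    exact hlip.continuous.comp (continuous_id.sub continuous_const)
  · intro x y
    rw [hf2]
    have h := cubedAuxB_op_bound (x - t₀) (y - t₀)
    have he : x - t₀ - (y - t₀) = x - y := by abel
    rwa [he] at h
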